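/- Let T_n be the sequence of polynomials defined by T_0(x) = x and T_n(x) = (1 - x²)·T_{n-1}'(x) for n ≥ 1. Then for every n ≥ 1, ∫_{-1}^{1} T_n(x) dx = ((2n+2)/(2^{n+1} - 1)) · T_n(0). -/

import Mathlib

open Polynomial Real MeasureTheory

noncomputable def T : ℕ → Polynomial ℚ
  | 0 => Polynomial.X
  | n + 1 => (1 - Polynomial.X ^ 2) * Polynomial.derivative (T n)

namespace TangentAux

/-! ### Rational integration of polynomials -/

noncomputable def antider (p : Polynomial ℚ) : Polynomial ℚ :=
  p.sum fun j a => Polynomial.C (a / (j + 1)) * Polynomial.X ^ (j + 1)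

lemma derivative_antider (p : Polynomial ℚ) :
    Polynomial.derivative (antider p) = p := by
  rw [antider, Polynomial.sum, map_sum]
  conv_rhs => rw [← Polynomial.sum_C_mul_X_pow_eq p, Polynomial.sum]
  refine Finset.sum_congr rfl fun j _ => ?_
  rw [Polynomial.derivative_C_mul_X_pow, Nat.add_sub_cancel]
  congr 1
  push_cast
  field_simp

noncomputable def intQ (p : Polynomial ℚ) : ℚ :=
  (antider p).eval 1 - (antider p).eval (-1)

lemma intQ_eq_of_derivative {q p : Polynomial ℚ} (h : Polynomial.derivative q = p) :
    intQ p = q.eval 1 - q.eval (-1) := by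
  have h2 : Polynomial.derivative (antider p - q) = 0 := by
    rw [map_sub, derivative_antider, h, sub_self]
  have ha := Polynomial.eq_C_of_derivative_eq_zero h2
  have h1 : antider p = q + Polynomial.C ((antider p - q).coeff 0) := by
    rw [← ha]; ring
  rw [intQ, h1]
  simp only [Polynomial.eval_add, Polynomial.eval_C]
  ring

lemma intQ_derivative (q : Polynomial ℚ) :
    intQ (Polynomial.derivative q) = q.eval 1 - q.eval (-1) :=
  intQ_eq_of_derivative rfl

lemma antider_add (p q : Polynomial ℚ) : antider (p + q) = antider p + antider q := by
  rw [antider, antider, antider, Polynomial.sum_add_index]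
  · intro i; simp
  · intro i a b; rw [← add_mul, ← Polynomial.C_add, add_div]

lemma intQ_add (p q : Polynomial ℚ) : intQ (p + q) = intQ p + intQ q := by
  simp only [intQ, antider_add, Polynomial.eval_add]; ring

lemma intQ_sub (p q : Polynomial ℚ) : intQ (p - q) = intQ p - intQ q := by
  have h := intQ_add (p - q) q
  simp only [sub_add_cancel] at h
  linarith

lemma antider_smul (a : ℚ) (p : Polynomial ℚ) : antider (a • p) = a • antider p := by
  rw [antider, Polynomial.sum_smul_index' (p := p) (b := a) _ (fun i => by simp),
    antider, Polynomial.smul_sum, Polynomial.sum_def, Polynomial.sum_def]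
  refine Finset.sum_congr rfl fun j _ => ?_
  rw [Polynomial.smul_eq_C_mul, smul_eq_mul, mul_div_assoc, Polynomial.C_mul, mul_assoc]

lemma intQ_smul (a : ℚ) (p : Polynomial ℚ) : intQ (a • p) = a * intQ p := by
  simp only [intQ, antider_smul, Polynomial.eval_smul, smul_eq_mul]; ring

lemma intQ_one : intQ 1 = 2 := by
  have h : Polynomial.derivative (Polynomial.X : Polynomial ℚ) = 1 := Polynomial.derivative_X
  rw [intQ_eq_of_derivative h]
  simp; norm_num

lemma intQ_zero : intQ 0 = 0 := by
  have h := intQ_add 0 0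
  simpa using h

lemma intQ_C_mul (a : ℚ) (p : Polynomial ℚ) : intQ (Polynomial.C a * p) = a * intQ p := by
  rw [← Polynomial.smul_eq_C_mul, intQ_smul]

noncomputable def intL : Polynomial ℚ →ₗ[ℚ] ℚ where
  toFun := intQ
  map_add' := intQ_add
  map_smul' := by intro a p; simp [intQ_smul]

lemma intQ_sum {α : Type*} (s : Finset α) (f : α → Polynomial ℚ) :
    intQ (∑ p ∈ s, f p) = ∑ p ∈ s, intQ (f p) := map_sum intL f s

/-! ### Generic power series helpers -/

open PowerSeries

section Generic
variable {R : Type*} [CommRing R]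

lemma psDeriv_mul (f g : R⟦X⟧) :
    d⁄dX R (f * g) = f * d⁄dX R g + g * d⁄dX R f := by
  have h := PowerSeries.derivativeFun_mul f g
  rw [smul_eq_mul, smul_eq_mul] at h
  exact h

lemma psDeriv_sq (f : R⟦X⟧) : d⁄dX R (f ^ 2) = 2 * f * d⁄dX R f := by
  rw [pow_two, psDeriv_mul]; ring

lemma psDeriv_one : d⁄dX R (1 : R⟦X⟧) = 0 := PowerSeries.derivativeFun_one

lemma psDeriv_two : d⁄dX R (2 : R⟦X⟧) = 0 := by
  have h : (2 : R⟦X⟧) = PowerSeries.C 2 := (map_ofNat (PowerSeries.C) 2).symm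
  rw [h, PowerSeries.derivative_C]

lemma psDerivative_map {S : Type*} [CommRing S] (f : R →+* S)
    (H : PowerSeries R) : d⁄dX S (PowerSeries.map f H) = PowerSeries.map f (d⁄dX R H) := by
  refine PowerSeries.ext fun n => ?_
  rw [PowerSeries.coeff_derivative, PowerSeries.coeff_map, PowerSeries.coeff_map,
    PowerSeries.coeff_derivative, map_mul]
  congr 1
  rw [map_add, map_natCast, map_one]

/-- unique solvability of linear ODEs: `u' = g u`, `u 0 = 0` implies `u = 0`. -/
lemma ode_zero {A : Type*} [CommRing A] [Algebra ℚ A] {u g : PowerSeries A}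
    (hu : d⁄dX A u = g * u) (h0 : constantCoeff u = 0) : u = 0 := by
  have key : ∀ n, coeff n u = 0 := by
    intro n
    induction n using Nat.strong_induction_on with
    | _ n ih =>
      match n with
      | 0 => rw [PowerSeries.coeff_zero_eq_constantCoeff]; exact h0
      | Nat.succ n =>
        have h := congrArg (PowerSeries.coeff n) hu
        rw [PowerSeries.coeff_derivative, PowerSeries.coeff_mul] at h
        rw [Finset.sum_eq_zero (fun p hp => by
          rw [ih p.2 (by
            have := Finset.HasAntidiagonal.mem_antidiagonal.mp hp
            omega), mul_zero])] at h
        have hcast : ((n : A) + 1) = algebraMap ℚ A ((n : ℚ) + 1) := by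
          rw [map_add, map_natCast, map_one]
        rw [hcast] at h
        have hne : ((n : ℚ) + 1) ≠ 0 := by positivity
        have h4 : coeff (n+1) u * algebraMap ℚ A ((n:ℚ)+1) * algebraMap ℚ A (((n:ℚ)+1)⁻¹)
            = 0 := by rw [h, zero_mul]
        rwa [mul_assoc, ← map_mul, mul_inv_cancel₀ hne, map_one, mul_one] at h4
  refine PowerSeries.ext fun n => by rw [key n, map_zero]

end Generic

/-! ### The two-variable series F -/

abbrev Poly := Polynomial ℚ

noncomputable def F : PowerSeries Poly := PowerSeries.mk fun m => (m.factorial : ℚ)⁻¹ • T m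

noncomputable def XX : PowerSeries Poly := PowerSeries.C Polynomial.X

lemma coeff_F (n : ℕ) : coeff n F = (n.factorial : ℚ)⁻¹ • T n := coeff_mk _ _

lemma hXXsq : (PowerSeries.C) (1 - Polynomial.X ^ 2) = 1 - XX ^ 2 := by
  rw [map_sub, map_pow, map_one, XX]

/-- coefficientwise (in `t`) derivative with respect to the polynomial variable -/
noncomputable def dX (H : PowerSeries Poly) : PowerSeries Poly :=
  PowerSeries.mk fun n => Polynomial.derivative (coeff n H)

lemma coeff_dX (H : PowerSeries Poly) (n : ℕ) :
    coeff n (dX H) = Polynomial.derivative (coeff n H) := coeff_mk _ _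

lemma dX_add (f g : PowerSeries Poly) : dX (f + g) = dX f + dX g := by
  refine PowerSeries.ext fun n => ?_
  rw [coeff_dX, map_add, map_add, map_add, coeff_dX, coeff_dX]

lemma dX_sub (f g : PowerSeries Poly) : dX (f - g) = dX f - dX g := by
  refine PowerSeries.ext fun n => ?_
  rw [coeff_dX, map_sub, map_sub, map_sub, coeff_dX, coeff_dX]

lemma dX_one : dX 1 = 0 := by
  refine PowerSeries.ext fun n => ?_
  rw [coeff_dX, PowerSeries.coeff_one, map_zero]
  split_ifs <;> simp

lemma dX_mul (f g : PowerSeries Poly) : dX (f * g) = dX f * g + f * dX g := by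
  refine PowerSeries.ext fun n => ?_
  rw [coeff_dX, PowerSeries.coeff_mul, map_sum, map_add, PowerSeries.coeff_mul,
    PowerSeries.coeff_mul, ← Finset.sum_add_distrib]
  refine Finset.sum_congr rfl fun p _ => ?_
  rw [Polynomial.derivative_mul, coeff_dX, coeff_dX]

lemma dX_XX : dX XX = 1 := by
  refine PowerSeries.ext fun n => ?_
  rw [coeff_dX, XX, PowerSeries.coeff_C, PowerSeries.coeff_one]
  split_ifs <;> simp

lemma dX_sq (f : PowerSeries Poly) : dX (f ^ 2) = 2 * f * dX f := by
  rw [pow_two, dX_mul]; ring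

lemma derivative_XX : d⁄dX Poly XX = 0 := by rw [XX, PowerSeries.derivative_C]

lemma dX_derivative_comm (H : PowerSeries Poly) : dX (d⁄dX Poly H) = d⁄dX Poly (dX H) := by
  refine PowerSeries.ext fun n => ?_
  rw [coeff_dX, PowerSeries.coeff_derivative, PowerSeries.coeff_derivative, coeff_dX,
    Polynomial.derivative_mul]
  simp [Polynomial.derivative_natCast]

/-- the PDE satisfied by F, by definition of T -/
lemma pde_F : d⁄dX Poly F = (1 - XX ^ 2) * dX F := by
  refine PowerSeries.ext fun n => ?_
  rw [PowerSeries.coeff_derivative, ← hXXsq, PowerSeries.coeff_C_mul, coeff_dX, coeff_F, coeff_F]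
  rw [Polynomial.derivative_smul]
  have hT : T (n + 1) = (1 - Polynomial.X ^ 2) * Polynomial.derivative (T n) := rfl
  have hfact : ((n + 1).factorial : ℚ)⁻¹ * ((n : ℚ) + 1) = (n.factorial : ℚ)⁻¹ := by
    rw [Nat.factorial_succ]
    push_cast
    rw [mul_inv]
    field_simp
  calc ((n+1).factorial : ℚ)⁻¹ • T (n+1) * ((n : Poly) + 1)
      = (((n+1).factorial : ℚ)⁻¹ * ((n:ℚ)+1)) • T (n+1) := by
        have hmul : T (n+1) * ((n : Poly) + 1) = ((n:ℚ)+1) • T (n+1) := by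
          rw [Polynomial.smul_eq_C_mul, map_add, map_natCast, map_one]
          ring
        rw [smul_mul_assoc, hmul, smul_smul]
    _ = (n.factorial : ℚ)⁻¹ • T (n+1) := by rw [hfact]
    _ = (1 - Polynomial.X ^ 2) * ((n.factorial : ℚ)⁻¹ • Polynomial.derivative (T n)) := by
        rw [hT, mul_smul_comm]

/-- solutions of the PDE with zero initial condition vanish -/
lemma pde_zero {u : PowerSeries Poly} (hu : d⁄dX Poly u = (1 - XX ^ 2) * dX u)
    (h0 : constantCoeff u = 0) : u = 0 := by
  have key : ∀ n, coeff n u = 0 := by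
    intro n
    induction n with
    | zero => rw [PowerSeries.coeff_zero_eq_constantCoeff]; exact h0
    | succ n ih =>
      have h := congrArg (PowerSeries.coeff n) hu
      rw [PowerSeries.coeff_derivative, ← hXXsq, PowerSeries.coeff_C_mul, coeff_dX, ih,
        map_zero, mul_zero] at h
      have hne : ((n : Poly) + 1) ≠ 0 := by
        have h5 : ((n + 1 : ℕ) : Poly) ≠ 0 := Nat.cast_ne_zero.mpr (Nat.succ_ne_zero n)
        push_cast at h5
        exact h5
      rcases mul_eq_zero.mp h with h' | h'
      · exact h'
      · exact absurd h' hne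
  refine PowerSeries.ext fun n => by rw [key n, map_zero]

lemma constantCoeff_F : constantCoeff F = Polynomial.X := by
  rw [← PowerSeries.coeff_zero_eq_constantCoeff, coeff_F]
  simp [T]

/-- the main ODE : F' = 1 - F² -/
lemma F_ODE : d⁄dX Poly F = 1 - F ^ 2 := by
  have hpde : d⁄dX Poly (d⁄dX Poly F + F ^ 2 - 1)
      = (1 - XX ^ 2) * dX (d⁄dX Poly F + F ^ 2 - 1) := by
    have hz : d⁄dX Poly (1 - XX ^ 2) = 0 := by
      rw [map_sub, psDeriv_one, psDeriv_sq, derivative_XX]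
      ring
    have h2 : d⁄dX Poly (d⁄dX Poly F) = (1 - XX ^ 2) * dX (d⁄dX Poly F) := by
      conv_lhs => rw [pde_F]
      rw [psDeriv_mul, ← dX_derivative_comm, hz]
      ring
    have h3 : d⁄dX Poly (F ^ 2) = (1 - XX ^ 2) * dX (F ^ 2) := by
      rw [psDeriv_sq, dX_sq, pde_F]
      ring
    rw [map_sub, map_add, psDeriv_one, dX_sub, dX_add, dX_one, h2, h3]
    ring
  have h0 : PowerSeries.constantCoeff (d⁄dX Poly F + F ^ 2 - 1) = 0 := by
    rw [map_sub, map_add, map_one, map_pow, constantCoeff_F,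
      ← PowerSeries.coeff_zero_eq_constantCoeff, PowerSeries.coeff_derivative, coeff_F]
    simp [T]
  have hz := pde_zero hpde h0
  linear_combination hz

/-! ### the one-variable series c (tangent series) -/

noncomputable def ev (r : ℚ) : PowerSeries Poly →+* PowerSeries ℚ :=
  PowerSeries.map (Polynomial.evalRingHom r)

noncomputable def c : PowerSeries ℚ := ev 0 F

noncomputable def ctil : PowerSeries Poly := PowerSeries.map (Polynomial.C : ℚ →+* Poly) c

lemma c_ODE : d⁄dX ℚ c = 1 - c ^ 2 := by
  rw [c, ev, psDerivative_map, F_ODE, map_sub, map_one, map_pow]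

lemma constantCoeff_c : constantCoeff c = 0 := by
  rw [c, ev, ← PowerSeries.coeff_zero_eq_constantCoeff, PowerSeries.coeff_map, coeff_F]
  simp [T]

lemma coeff_one_c : coeff 1 c = 1 := by
  rw [c, ev, PowerSeries.coeff_map, coeff_F]
  simp [T]

lemma c_ne_zero : c ≠ 0 := by
  intro h
  have h1 := coeff_one_c
  rw [h, map_zero] at h1
  exact one_ne_zero h1.symm

lemma ctil_ODE : d⁄dX Poly ctil = 1 - ctil ^ 2 := by
  rw [ctil, psDerivative_map, c_ODE, map_sub, map_one, map_pow]

lemma constantCoeff_ctil : constantCoeff ctil = 0 := by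
  rw [ctil, ← PowerSeries.coeff_zero_eq_constantCoeff, PowerSeries.coeff_map,
    PowerSeries.coeff_zero_eq_constantCoeff, constantCoeff_c, map_zero]

lemma dX_ctil : dX ctil = 0 := by
  refine PowerSeries.ext fun n => ?_
  rw [coeff_dX, ctil, PowerSeries.coeff_map, map_zero]
  exact Polynomial.derivative_C

lemma constantCoeff_XX : constantCoeff XX = Polynomial.X := by
  rw [XX]; exact PowerSeries.constantCoeff_C _

/-! ### the addition formula -/

noncomputable def Pser : PowerSeries Poly := 1 + XX * ctil

lemma addition : F * Pser = XX + ctil := by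
  have key : F * Pser - XX - ctil = 0 := by
    apply ode_zero (g := -(F + ctil))
    · rw [Pser, map_sub, map_sub, psDeriv_mul, map_add, psDeriv_one, psDeriv_mul,
        derivative_XX, F_ODE, ctil_ODE]
      ring
    · rw [map_sub, map_sub, map_mul, Pser, map_add, map_one, map_mul, constantCoeff_F,
        constantCoeff_ctil, constantCoeff_XX]
      ring
  linear_combination key

lemma constantCoeff_Pser : constantCoeff Pser = 1 := by
  rw [Pser, map_add, map_one, map_mul, constantCoeff_ctil, mul_zero, add_zero]

noncomputable def Hser : PowerSeries Poly := PowerSeries.invOfUnit Pser 1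

lemma PH : Pser * Hser = 1 :=
  PowerSeries.mul_invOfUnit Pser 1 (by rw [constantCoeff_Pser]; rfl)

lemma Pcancel {A B : PowerSeries Poly} (h : Pser * A = Pser * B) : A = B := by
  have h2 := congrArg (Hser * ·) h
  simp only [← mul_assoc, mul_comm Hser Pser, PH, one_mul] at h2
  exact h2

lemma dP_t : d⁄dX Poly Pser = XX * (1 - ctil ^ 2) := by
  rw [Pser, map_add, psDeriv_one, psDeriv_mul, derivative_XX, ctil_ODE]
  ring

lemma dP_x : dX Pser = ctil := by
  rw [Pser, dX_add, dX_one, dX_mul, dX_XX, dX_ctil]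
  ring

lemma dH_t : Pser * d⁄dX Poly Hser = -(XX * (1 - ctil ^ 2)) * Hser := by
  have h := congrArg (d⁄dX Poly) PH
  rw [psDeriv_mul, psDeriv_one, dP_t] at h
  linear_combination h

lemma dH_x : Pser * dX Hser = -ctil * Hser := by
  have h := congrArg dX PH
  rw [dX_mul, dX_one, dP_x] at h
  linear_combination h

lemma key_exchange : ctil * d⁄dX Poly Hser = XX * (1 - ctil ^ 2) * dX Hser := by
  apply Pcancel
  calc Pser * (ctil * d⁄dX Poly Hser) = ctil * (Pser * d⁄dX Poly Hser) := by ring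
    _ = ctil * (-(XX * (1 - ctil ^ 2)) * Hser) := by rw [dH_t]
    _ = XX * (1 - ctil ^ 2) * (Pser * dX Hser) - XX * (1 - ctil^2) * (-ctil * Hser)
        + ctil * (-(XX * (1 - ctil ^ 2)) * Hser) := by rw [dH_x]; ring
    _ = Pser * (XX * (1 - ctil ^ 2) * dX Hser) := by ring

/-! ### the Λ functional -/

noncomputable def Lam (H : PowerSeries Poly) : PowerSeries ℚ :=
  PowerSeries.mk fun n => intQ (coeff n H)

lemma coeff_Lam (H : PowerSeries Poly) (n : ℕ) :
    coeff n (Lam H) = intQ (coeff n H) := coeff_mk _ _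

lemma Lam_sub (f g : PowerSeries Poly) : Lam (f - g) = Lam f - Lam g := by
  refine PowerSeries.ext fun n => ?_
  rw [coeff_Lam, map_sub, map_sub, coeff_Lam, coeff_Lam, intQ_sub]

lemma Lam_smulC (s : PowerSeries ℚ) (H : PowerSeries Poly) :
    Lam (PowerSeries.map (Polynomial.C : ℚ →+* Poly) s * H) = s * Lam H := by
  refine PowerSeries.ext fun n => ?_
  rw [coeff_Lam, PowerSeries.coeff_mul, PowerSeries.coeff_mul, intQ_sum]
  refine Finset.sum_congr rfl fun p _ => ?_
  rw [PowerSeries.coeff_map, intQ_C_mul, coeff_Lam]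

lemma Lam_derivative (H : PowerSeries Poly) : Lam (d⁄dX Poly H) = d⁄dX ℚ (Lam H) := by
  refine PowerSeries.ext fun n => ?_
  rw [coeff_Lam, PowerSeries.coeff_derivative, PowerSeries.coeff_derivative, coeff_Lam]
  have h : coeff (n+1) H * ((n : Poly) + 1)
      = Polynomial.C ((n : ℚ) + 1) * coeff (n+1) H := by
    rw [map_add, map_natCast, map_one]
    ring
  rw [h, intQ_C_mul]
  ring

lemma Lam_one : Lam 1 = 2 := by
  refine PowerSeries.ext fun n => ?_
  rw [coeff_Lam, show (2:PowerSeries ℚ) = PowerSeries.C 2 from (map_ofNat _ 2).symm,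
    PowerSeries.coeff_C, PowerSeries.coeff_one]
  split_ifs
  · exact intQ_one
  · exact intQ_zero

lemma Lam_dXG (G : PowerSeries Poly) : Lam (dX G) = ev 1 G - ev (-1) G := by
  refine PowerSeries.ext fun n => ?_
  rw [coeff_Lam, coeff_dX, intQ_derivative, map_sub, ev, ev, PowerSeries.coeff_map,
    PowerSeries.coeff_map]
  rfl

lemma ev_XX (r : ℚ) : ev r XX = PowerSeries.C r := by
  rw [ev, XX, PowerSeries.map_C]
  simp

lemma ev_ctil (r : ℚ) : ev r ctil = c := by
  refine PowerSeries.ext fun n => ?_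
  rw [ev, PowerSeries.coeff_map, ctil, PowerSeries.coeff_map]
  simp

lemma CC_one : (PowerSeries.C) (1:ℚ) = 1 := by simp

lemma CC_negone : (PowerSeries.C) (-1:ℚ) = -1 := by
  rw [map_neg, CC_one]

lemma Lam_X_dX (H : PowerSeries Poly) :
    Lam (XX * dX H) = ev 1 H + ev (-1) H - Lam H := by
  have h : XX * dX H = dX (XX * H) - H := by
    rw [dX_mul, dX_XX]; ring
  rw [h, Lam_sub, Lam_dXG, map_mul, map_mul, ev_XX, ev_XX, CC_one, CC_negone]
  ring


/-! ### computation of c * w -/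

noncomputable def w : PowerSeries ℚ := Lam Hser

lemma ev_Pser_one : (1 + c) * ev 1 Hser = 1 := by
  have h := congrArg (ev 1) PH
  rw [map_mul, map_one] at h
  have h2 : ev 1 Pser = 1 + c := by
    rw [Pser, map_add, map_one, map_mul, ev_XX, ev_ctil, CC_one]
    ring
  rw [h2] at h
  exact h

lemma ev_Pser_negone : (1 - c) * ev (-1) Hser = 1 := by
  have h := congrArg (ev (-1)) PH
  rw [map_mul, map_one] at h
  have h2 : ev (-1) Pser = 1 - c := by
    rw [Pser, map_add, map_one, map_mul, ev_XX, ev_ctil, CC_negone]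
    ring
  rw [h2] at h
  exact h

lemma cw_deriv : c * d⁄dX ℚ w = 2 - (1 - c ^ 2) * w := by
  have hctil : ctil = PowerSeries.map (Polynomial.C : ℚ →+* Poly) c := rfl
  have step1 : c * d⁄dX ℚ w = Lam (ctil * d⁄dX Poly Hser) := by
    rw [w, ← Lam_derivative, hctil, Lam_smulC]
  have step2 : Lam (ctil * d⁄dX Poly Hser) = (1 - c ^ 2) * Lam (XX * dX Hser) := by
    rw [key_exchange]
    have h3 : XX * (1 - ctil ^ 2) * dX Hser
        = PowerSeries.map (Polynomial.C : ℚ →+* Poly) (1 - c ^ 2) * (XX * dX Hser) := by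
      rw [map_sub, map_one, map_pow, ← hctil]
      ring
    rw [h3, Lam_smulC]
  have step3 : (1 - c ^ 2) * Lam (XX * dX Hser) = 2 - (1 - c ^ 2) * w := by
    rw [Lam_X_dX]
    have e1 : (1 - c ^ 2) * ev 1 Hser = 1 - c := by
      calc (1 - c ^ 2) * ev 1 Hser = (1 - c) * ((1 + c) * ev 1 Hser) := by ring
        _ = 1 - c := by rw [ev_Pser_one]; ring
    have e2 : (1 - c ^ 2) * ev (-1) Hser = 1 + c := by
      calc (1 - c ^ 2) * ev (-1) Hser = (1 + c) * ((1 - c) * ev (-1) Hser) := by ring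
        _ = 1 + c := by rw [ev_Pser_negone]; ring
    calc (1 - c ^ 2) * (ev 1 Hser + ev (-1) Hser - Lam Hser)
        = (1 - c ^ 2) * ev 1 Hser + (1 - c ^ 2) * ev (-1) Hser - (1 - c^2) * Lam Hser := by
          ring
      _ = 2 - (1 - c ^ 2) * w := by rw [e1, e2, w]; ring
  rw [step1, step2, step3]

lemma cw_eq : c * w = 2 * PowerSeries.X := by
  apply PowerSeries.derivative.ext
  · rw [psDeriv_mul, c_ODE, cw_deriv, psDeriv_mul, psDeriv_two, PowerSeries.derivative_X]
    ring
  · rw [map_mul, constantCoeff_c, zero_mul, map_mul, PowerSeries.constantCoeff_X, mul_zero]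

/-! ### the main identity -/

noncomputable def J : PowerSeries ℚ := Lam F

lemma ctilF : ctil ^ 2 * F = ctil - ctil * (1 - ctil ^ 2) * Hser := by
  apply Pcancel
  calc Pser * (ctil ^ 2 * F) = ctil ^ 2 * (F * Pser) := by ring
    _ = ctil ^ 2 * (XX + ctil) := by rw [addition]
    _ = ctil * Pser - ctil * (1 - ctil ^ 2) * 1 := by rw [Pser]; ring
    _ = ctil * Pser - ctil * (1 - ctil ^ 2) * (Pser * Hser) := by rw [PH]
    _ = Pser * (ctil - ctil * (1 - ctil ^ 2) * Hser) := by ring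

lemma main_M : c ^ 2 * J = 2 * c - 2 * PowerSeries.X * (1 - c ^ 2) := by
  have hctil : ctil = PowerSeries.map (Polynomial.C : ℚ →+* Poly) c := rfl
  have h := congrArg Lam ctilF
  have l1 : Lam (ctil ^ 2 * F) = c ^ 2 * J := by
    have h2 : ctil ^ 2 * F = PowerSeries.map (Polynomial.C : ℚ →+* Poly) (c ^ 2) * F := by
      rw [map_pow, ← hctil]
    rw [h2, Lam_smulC, J]
  have l2 : Lam (ctil - ctil * (1 - ctil ^ 2) * Hser)
      = 2 * c - (1 - c ^ 2) * (2 * PowerSeries.X) := by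
    rw [Lam_sub]
    have e1 : Lam ctil = 2 * c := by
      have h3 : ctil = PowerSeries.map (Polynomial.C : ℚ →+* Poly) c * 1 :=
        (mul_one _).symm
      rw [h3, Lam_smulC, Lam_one]
      ring
    have e2 : Lam (ctil * (1 - ctil ^ 2) * Hser) = (1 - c ^ 2) * (c * w) := by
      have h4 : ctil * (1 - ctil ^ 2) * Hser
          = PowerSeries.map (Polynomial.C : ℚ →+* Poly) (c * (1 - c ^ 2)) * Hser := by
        rw [map_mul, map_sub, map_one, map_pow, ← hctil]
      rw [h4, Lam_smulC, w]
      ring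
    rw [e1, e2, cw_eq]
  rw [l1, l2] at h
  rw [h]
  ring

/-! ### rescaling (doubling) -/

lemma two_eq_C : (2 : PowerSeries ℚ) = PowerSeries.C 2 := (map_ofNat _ 2).symm

noncomputable def r2 : PowerSeries ℚ →+* PowerSeries ℚ := PowerSeries.rescale (2 : ℚ)

lemma derivative_r2 (f : PowerSeries ℚ) :
    d⁄dX ℚ (r2 f) = 2 * r2 (d⁄dX ℚ f) := by
  rw [two_eq_C]
  refine PowerSeries.ext fun n => ?_
  rw [PowerSeries.coeff_derivative, PowerSeries.coeff_C_mul, r2, PowerSeries.coeff_rescale,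
    PowerSeries.coeff_rescale, PowerSeries.coeff_derivative]
  ring

noncomputable def c2 : PowerSeries ℚ := r2 c
noncomputable def J2 : PowerSeries ℚ := r2 J

lemma c2_ODE : d⁄dX ℚ c2 = 2 * (1 - c2 ^ 2) := by
  rw [c2, derivative_r2, c_ODE, map_sub, map_one, map_pow]

lemma constantCoeff_c2 : constantCoeff c2 = 0 := by
  rw [c2, ← PowerSeries.coeff_zero_eq_constantCoeff, r2, PowerSeries.coeff_rescale,
    pow_zero, one_mul, PowerSeries.coeff_zero_eq_constantCoeff, constantCoeff_c]

lemma duplication : c2 * (1 + c ^ 2) = 2 * c := by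
  have key : c2 * (1 + c ^ 2) - 2 * c = 0 := by
    apply ode_zero (g := -(2 * (c + c2)))
    · rw [map_sub, psDeriv_mul, map_add, psDeriv_one, psDeriv_sq, psDeriv_mul, psDeriv_two,
        c_ODE, c2_ODE]
      ring
    · rw [map_sub, map_mul, map_add, map_one, map_pow, map_mul, map_ofNat,
        constantCoeff_c2, constantCoeff_c]
      ring
  linear_combination key

lemma main_M2 : c2 ^ 2 * J2
    = 2 * c2 - 2 * (PowerSeries.C 2 * PowerSeries.X) * (1 - c2 ^ 2) := by
  have h := congrArg r2 main_M
  rw [map_mul, map_pow, map_sub, map_mul, map_mul, map_mul, map_sub, map_one, map_pow] at h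
  rw [show r2 (2 : PowerSeries ℚ) = 2 from map_ofNat r2 2,
    show r2 PowerSeries.X = PowerSeries.C 2 * PowerSeries.X from PowerSeries.rescale_X 2] at h
  exact h

lemma four_ne_zero : (4 : PowerSeries ℚ) ≠ 0 := by
  intro h
  have h2 := congrArg (PowerSeries.constantCoeff (R := ℚ)) h
  rw [map_ofNat, map_zero] at h2
  norm_num at h2

lemma main_J2 : c ^ 2 * J2
    = c * (1 + c ^ 2) - PowerSeries.X * (1 - c ^ 2) ^ 2 := by
  have e1 : (2 * c) ^ 2 * J2 = (1 + c ^ 2) ^ 2 * (c2 ^ 2 * J2) := by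
    rw [← duplication]; ring
  rw [main_M2] at e1
  have h4 : (4 : PowerSeries ℚ) * (c ^ 2 * J2)
      = 4 * (c * (1 + c ^ 2) - PowerSeries.X * (1 - c ^ 2) ^ 2) := by
    calc (4 : PowerSeries ℚ) * (c ^ 2 * J2) = (2 * c) ^ 2 * J2 := by ring
      _ = (1 + c ^ 2) ^ 2 * (2 * c2 - 2 * (PowerSeries.C 2 * PowerSeries.X) * (1 - c2 ^ 2)) :=
          e1
      _ = 2 * (1 + c ^ 2) * (c2 * (1 + c ^ 2))
          - (2 * PowerSeries.X * 2) * ((1 + c ^ 2) ^ 2 - (c2 * (1 + c ^ 2)) ^ 2) := by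
          rw [← two_eq_C]; ring
      _ = 2 * (1 + c ^ 2) * (2 * c)
          - (2 * PowerSeries.X * 2) * ((1 + c ^ 2) ^ 2 - (2 * c) ^ 2) := by rw [duplication]
      _ = 4 * (c * (1 + c ^ 2) - PowerSeries.X * (1 - c ^ 2) ^ 2) := by ring
  exact mul_left_cancel₀ four_ne_zero h4

lemma final_series : 2 * J2 - J = 2 * c + 2 * PowerSeries.X * (1 - c ^ 2) := by
  have hc2 : c ^ 2 ≠ 0 := pow_ne_zero _ c_ne_zero
  apply mul_left_cancel₀ hc2
  linear_combination (2 : PowerSeries ℚ) * main_J2 - main_M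

/-! ### coefficient extraction -/

lemma coeff_c_eq (n : ℕ) : coeff n c = (n.factorial : ℚ)⁻¹ * (T n).coeff 0 := by
  rw [c, ev, PowerSeries.coeff_map, coeff_F, Polynomial.coe_evalRingHom,
    Polynomial.eval_smul, smul_eq_mul, ← Polynomial.coeff_zero_eq_eval_zero]

lemma coeff_J_eq (n : ℕ) : coeff n J = (n.factorial : ℚ)⁻¹ * intQ (T n) := by
  rw [J, coeff_Lam, coeff_F, intQ_smul]

lemma key_rat (n : ℕ) (hn : 1 ≤ n) :
    (2 ^ (n + 1) - 1 : ℚ) * intQ (T n) = (2 * n + 2) * (T n).coeff 0 := by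
  obtain ⟨m, rfl⟩ : ∃ m, n = m + 1 := ⟨n - 1, by omega⟩
  have h := congrArg (PowerSeries.coeff (m + 1)) final_series
  rw [map_sub, map_add, two_eq_C, PowerSeries.coeff_C_mul, PowerSeries.coeff_C_mul] at h
  rw [show PowerSeries.C 2 * PowerSeries.X * (1 - c ^ 2)
      = PowerSeries.C 2 * (PowerSeries.X * d⁄dX ℚ c) from by rw [c_ODE]; ring] at h
  rw [PowerSeries.coeff_C_mul, PowerSeries.coeff_succ_X_mul, PowerSeries.coeff_derivative] at h
  rw [show J2 = r2 J from rfl, r2, PowerSeries.coeff_rescale] at h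
  rw [coeff_J_eq, coeff_c_eq] at h
  set k : ℚ := (((m+1).factorial : ℕ) : ℚ) with hkdef
  have hkne : k ≠ 0 := Nat.cast_ne_zero.mpr (Nat.factorial_ne_zero _)
  obtain ⟨q, hq⟩ : ∃ q, intQ (T (m+1)) = k * q :=
    ⟨k⁻¹ * intQ (T (m+1)), (mul_inv_cancel_left₀ hkne _).symm⟩
  obtain ⟨r, hr⟩ : ∃ r, (T (m+1)).coeff 0 = k * r :=
    ⟨k⁻¹ * (T (m+1)).coeff 0, (mul_inv_cancel_left₀ hkne _).symm⟩
  rw [hq, hr] at h ⊢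
  simp only [inv_mul_cancel_left₀ hkne] at h
  push_cast at h ⊢
  linear_combination k * h

/-! ### the analytic bridge -/

lemma aeval_cast (q : Polynomial ℚ) (r : ℚ) :
    (Polynomial.aeval ((r : ℝ)) q) = ((q.eval r : ℚ) : ℝ) := by
  have h : ((r : ℝ)) = algebraMap ℚ ℝ r := rfl
  rw [h, Polynomial.aeval_algebraMap_apply_eq_algebraMap_eval]
  rfl

lemma integral_aeval (p : Polynomial ℚ) :
    ∫ x in (-1:ℝ)..1, (Polynomial.aeval x p : ℝ) = (intQ p : ℝ) := by
  have key : ∀ x ∈ Set.uIcc (-1:ℝ) 1,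
      HasDerivAt (fun y : ℝ => (Polynomial.aeval y (antider p) : ℝ))
      (Polynomial.aeval x p) x := by
    intro x _
    have h := Polynomial.hasDerivAt_aeval (q := antider p) x
    rwa [derivative_antider] at h
  rw [intervalIntegral.integral_eq_sub_of_hasDerivAt key
    ((Polynomial.continuous_aeval p).intervalIntegrable _ _)]
  have h1 := aeval_cast (antider p) 1
  have h2 := aeval_cast (antider p) (-1)
  push_cast at h1 h2 ⊢
  rw [h1, h2, intQ]
  push_cast
  ring

end TangentAux

theorem integral_T_eq_tangent (n : ℕ) (hn : 1 ≤ n) :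
    ∫ x in (-1 : ℝ)..1, (Polynomial.aeval x (T n) : ℝ) =
      ((2 * (n : ℝ) + 2) / (2 ^ (n + 1) - 1)) * (Polynomial.aeval (0 : ℝ) (T n)) := by
  rw [TangentAux.integral_aeval]
  have h0 : (Polynomial.aeval (0 : ℝ) (T n)) = (((T n).coeff 0 : ℚ) : ℝ) := by
    have h := TangentAux.aeval_cast (T n) 0
    rw [show ((0:ℚ):ℝ) = (0:ℝ) from by norm_num] at h
    rw [h, Polynomial.coeff_zero_eq_eval_zero]
  have key := TangentAux.key_rat n hn
  have hne : (2 ^ (n + 1) - 1 : ℝ) ≠ 0 := by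
    have h2 : (2:ℝ) ^ 1 ≤ 2 ^ (n+1) := pow_le_pow_right₀ (by norm_num) (by omega)
    norm_num at h2
    linarith
  rw [h0, div_mul_eq_mul_div, eq_div_iff hne]
  have keyR : ((2 ^ (n + 1) - 1 : ℚ) : ℝ) * ((TangentAux.intQ (T n) : ℚ) : ℝ)
      = ((2 * n + 2 : ℚ) : ℝ) * (((T n).coeff 0 : ℚ) : ℝ) := by
    exact_mod_cast congrArg (fun q : ℚ => (q : ℝ)) key
  push_cast at keyR ⊢
  linarith
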